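/- The number of integers n ≤ x of the form n = p₁^{α₁}⋯p_r^{α_r} with primes p_i (not necessarily distinct) is O(x^{1/α₁} (log log x)^{r-1} / log x), where α₁ ≤ α₂ ≤ ⋯ ≤ α_r are positive integers. -/

import Mathlib

open Filter Asymptotics Real

/-- The set of integers expressible as `p₁^{β 0} ⋯ p_r^{β (r-1)}` for primes `pᵢ`
(repetitions allowed). -/
def Psigma {r : ℕ} (β : Fin r → ℕ) : Set ℕ :=
  {n | ∃ p : Fin r → ℕ, (∀ i, (p i).Prime) ∧ n = ∏ i, p i ^ β i}

/-- The set of integers expressible as `p₁^{β 0} ⋯ p_r^{β (r-1)}` for pairwise distinct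
primes `pᵢ`. -/
def Ppi {r : ℕ} (β : Fin r → ℕ) : Set ℕ :=
  {n | ∃ p : Fin r → ℕ, (∀ i, (p i).Prime) ∧ Function.Injective p ∧ n = ∏ i, p i ^ β i}

/-- The number of `n ∈ S` with `n ≤ x`. -/
noncomputable def countIn (S : Set ℕ) (x : ℝ) : ℕ :=
  Nat.card {n : ℕ | (n : ℝ) ≤ x ∧ n ∈ S}

open Finset


/-- primes up to y -/
def PB (y : ℕ) : Finset ℕ := (Finset.range (y+1)).filter Nat.Prime

lemma mem_PB {p y : ℕ} : p ∈ PB y ↔ p ≤ y ∧ p.Prime := by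
  simp [PB, Nat.lt_succ_iff, and_comm]

lemma log_primorial_le (y : ℕ) : ∑ p ∈ PB y, Real.log p ≤ y * Real.log 4 := by
  have hpos : 0 < primorial y := by
    apply Finset.prod_pos
    intro p hp
    simp only [Finset.mem_filter] at hp
    exact hp.2.pos
  have h1 : ∑ p ∈ PB y, Real.log p = Real.log (primorial y) := by
    rw [← Real.log_prod]
    · norm_num [primorial, PB]
    · intro p hp
      exact_mod_cast (mem_PB.1 hp).2.pos.ne'
  rw [h1]
  calc Real.log (primorial y) ≤ Real.log (4 ^ y) := by
        apply Real.log_le_log (by exact_mod_cast hpos)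
        exact_mod_cast primorial_le_4_pow y
    _ = y * Real.log 4 := by rw [Real.log_pow]

lemma card_PB_gt_mul_log (y s : ℕ) :
    ((((PB y).filter (s < ·)).card : ℝ)) * Real.log (s+1) ≤ y * Real.log 4 := by
  have h : (((PB y).filter (s < ·)).card : ℝ) * Real.log (s+1)
      ≤ ∑ p ∈ (PB y).filter (s < ·), Real.log p := by
    rw [← nsmul_eq_mul]
    apply Finset.card_nsmul_le_sum
    intro p hp
    apply Real.log_le_log (by positivity)
    have h2 : s + 1 ≤ p := (Finset.mem_filter.1 hp).2
    exact_mod_cast h2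
  refine h.trans ?_
  refine (Finset.sum_le_sum_of_subset_of_nonneg (Finset.filter_subset _ _) ?_).trans
    (log_primorial_le y)
  intro p hp _
  exact Real.log_natCast_nonneg p

lemma chebyshev (y : ℕ) (hy : 2 ≤ y) : ((PB y).card : ℝ) * Real.log y ≤ 10 * y := by
  set s := Nat.sqrt y with hs
  have hy1 : (1:ℝ) ≤ (y:ℝ) := by exact_mod_cast (by omega : 1 ≤ y)
  have hcard : (PB y).card ≤ (s + 1) + ((PB y).filter (s < ·)).card := by
    have hsub : PB y ⊆ Finset.range (s+1) ∪ (PB y).filter (s < ·) := by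
      intro p hp
      rcases lt_or_ge p (s+1) with h | h
      · exact Finset.mem_union_left _ (Finset.mem_range.2 h)
      · exact Finset.mem_union_right _ (Finset.mem_filter.2 ⟨hp, by omega⟩)
    calc (PB y).card ≤ _ := Finset.card_le_card hsub
      _ ≤ _ := (Finset.card_union_le _ _).trans (by simp)
  have hsqrt : (Real.sqrt y) ≤ (s : ℝ) + 1 := by
    have h2 : (y : ℝ) ≤ ((s:ℝ)+1)^2 := by
      have := Nat.lt_succ_sqrt' y
      have h3 : y ≤ (s+1)^2 := by nlinarith [Nat.lt_succ_sqrt' y]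
      exact_mod_cast h3
    have := Real.sqrt_le_sqrt h2
    rwa [Real.sqrt_sq (by positivity)] at this
  have hlogy_pos : 0 < Real.log y := Real.log_pos (by exact_mod_cast hy)
  have hlog_half : Real.log y ≤ 2 * Real.log ((s:ℝ)+1) := by
    have h1 : Real.log y = 2 * Real.log (Real.sqrt y) := by
      rw [Real.log_sqrt (by positivity)]; ring
    rw [h1]
    have : Real.log (Real.sqrt y) ≤ Real.log ((s:ℝ)+1) := by
      apply Real.log_le_log (Real.sqrt_pos.2 (by positivity)) hsqrt
    linarith
  have hsy : ((s:ℝ)+1) ≤ 2 * Real.sqrt y := by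
    have h1 : (s : ℝ) ≤ Real.sqrt y := by
      have h2 : ((s:ℝ))^2 ≤ (y:ℝ) := by exact_mod_cast Nat.sqrt_le' y
      nlinarith [Real.sqrt_nonneg (y:ℝ), Real.sq_sqrt (show (0:ℝ) ≤ y by positivity),
        (by positivity : (0:ℝ) ≤ (s:ℝ))]
    have h2 : (1:ℝ) ≤ Real.sqrt y := by
      rw [show (1:ℝ) = Real.sqrt 1 by simp]
      exact Real.sqrt_le_sqrt hy1
    linarith
  have hlogsqrt : Real.log y ≤ 2 * Real.sqrt y := by
    rw [show Real.log y = 2 * Real.log (Real.sqrt y) by rw [Real.log_sqrt (by positivity)]; ring]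
    have := Real.log_le_sub_one_of_pos (Real.sqrt_pos.2 (show (0:ℝ) < y by positivity))
    linarith
  have hlog4 : Real.log 4 ≤ 1.4 := by
    rw [show (4:ℝ) = 2^2 by norm_num, Real.log_pow]
    have := Real.log_two_lt_d9
    push_cast
    linarith
  have key := card_PB_gt_mul_log y s
  have hgt : (((PB y).filter (s < ·)).card : ℝ) * Real.log y ≤ 3 * y := by
    have hc : (0:ℝ) ≤ (((PB y).filter (s < ·)).card : ℝ) := by positivity
    have h4 : (0:ℝ) ≤ Real.log 4 := by
      apply Real.log_nonneg; norm_num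
    have hy0 : (0:ℝ) ≤ (y:ℝ) := by positivity
    nlinarith [key, mul_le_mul_of_nonneg_left hlog_half hc]
  have hle : ((s:ℝ) + 1) * Real.log y ≤ 4 * y := by
    have h0 : (0:ℝ) ≤ Real.sqrt y := Real.sqrt_nonneg _
    have h1 : ((s:ℝ)+1) * Real.log y ≤ (2 * Real.sqrt y) * (2 * Real.sqrt y) :=
      mul_le_mul hsy hlogsqrt hlogy_pos.le (by linarith)
    have h2 : Real.sqrt y * Real.sqrt y = y := Real.mul_self_sqrt (by positivity)
    nlinarith
  have hcard' : ((PB y).card : ℝ) ≤ ((s:ℝ)+1) + (((PB y).filter (s < ·)).card : ℝ) := by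
    exact_mod_cast hcard
  nlinarith [mul_le_mul_of_nonneg_right hcard' hlogy_pos.le]

lemma loglog_ge_one {t : ℝ} (h : 16 ≤ t) : 1 ≤ Real.log (Real.log t) := by
  have h2 : Real.exp 1 ≤ Real.log t := by
    have h16 : Real.log 16 ≤ Real.log t := Real.log_le_log (by norm_num) h
    have : Real.log 16 = 4 * Real.log 2 := by
      rw [show (16:ℝ) = 2^4 by norm_num, Real.log_pow]; push_cast; ring
    nlinarith [Real.log_two_gt_d9, Real.exp_one_lt_d9]
  calc (1:ℝ) = Real.log (Real.exp 1) := (Real.log_exp 1).symm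
    _ ≤ _ := Real.log_le_log (Real.exp_pos 1) h2

lemma mertens : ∀ y : ℕ, 16 ≤ y → ∑ p ∈ PB y, (1/(p:ℝ)) ≤ 40 * Real.log (Real.log y) := by
  intro y
  induction y using Nat.strong_induction_on with
  | _ y ih =>
  intro hy
  have hy1 : (1:ℝ) ≤ (y:ℝ) := by exact_mod_cast (by omega : 1 ≤ y)
  have hll1 : 1 ≤ Real.log (Real.log y) := loglog_ge_one (by exact_mod_cast hy)
  rcases lt_or_ge y 32 with h32 | h32
  · -- base case
    have hcard : (PB y).card ≤ 32 := by
      calc (PB y).card ≤ (Finset.range (y+1)).card := Finset.card_le_card (Finset.filter_subset _ _)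
        _ = y + 1 := Finset.card_range _
        _ ≤ 32 := by omega
    have hsum : ∑ p ∈ PB y, (1/(p:ℝ)) ≤ (PB y).card * (1/2 : ℝ) := by
      rw [← nsmul_eq_mul]
      apply Finset.sum_le_card_nsmul
      intro p hp
      have hp2 := (mem_PB.1 hp).2.two_le
      rw [div_le_div_iff₀ (by exact_mod_cast (mem_PB.1 hp).2.pos) (by norm_num)]
      push_cast
      linarith [(show (2:ℝ) ≤ p by exact_mod_cast hp2)]
    have : ((PB y).card : ℝ) * (1/2:ℝ) ≤ 16 := by
      have : ((PB y).card : ℝ) ≤ 32 := by exact_mod_cast hcard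
      linarith
    linarith
  · -- inductive step
    set m := y / 2 with hm
    have hm16 : 16 ≤ m := by omega
    have hmlt : m < y := by omega
    have hm1 : (1:ℝ) ≤ (m:ℝ) := by exact_mod_cast (by omega : 1 ≤ m)
    have hsplit : ∑ p ∈ PB y, (1/(p:ℝ)) =
        ∑ p ∈ (PB y).filter (· ≤ m), (1/(p:ℝ)) + ∑ p ∈ (PB y).filter (¬ · ≤ m), (1/(p:ℝ)) :=
      (Finset.sum_filter_add_sum_filter_not _ _ _).symm
    have hhead : (PB y).filter (· ≤ m) = PB m := by
      ext p
      simp only [Finset.mem_filter, mem_PB]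
      constructor
      · rintro ⟨⟨_, hp⟩, h⟩; exact ⟨h, hp⟩
      · rintro ⟨h, hp⟩; exact ⟨⟨by omega, hp⟩, h⟩
    have hlogy_pos : (0:ℝ) < Real.log y := Real.log_pos (by exact_mod_cast (by omega : 2 ≤ y))
    have htail : ∑ p ∈ (PB y).filter (¬ · ≤ m), (1/(p:ℝ)) ≤ 20 / Real.log y := by
      have h1 : ∑ p ∈ (PB y).filter (¬ · ≤ m), (1/(p:ℝ))
          ≤ ((PB y).filter (¬ · ≤ m)).card * (2/(y:ℝ)) := by
        rw [← nsmul_eq_mul]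
        apply Finset.sum_le_card_nsmul
        intro p hp
        have h2 : m < p := by simpa using (Finset.mem_filter.1 hp).2
        have h3 : (y:ℝ) ≤ 2 * p := by
          have : y ≤ 2 * p := by omega
          exact_mod_cast this
        rw [div_le_div_iff₀ (by exact_mod_cast (mem_PB.1 (Finset.mem_filter.1 hp).1).2.pos)
          (by positivity)]
        linarith
      have h2 : (((PB y).filter (¬ · ≤ m)).card : ℝ) ≤ ((PB y).card : ℝ) := by
        exact_mod_cast Finset.card_le_card (Finset.filter_subset _ _)
      have h3 := chebyshev y (by omega)
      rw [le_div_iff₀ hlogy_pos]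
      have hy0 : (0:ℝ) < (y:ℝ) := by linarith
      calc (∑ p ∈ (PB y).filter (¬ · ≤ m), (1/(p:ℝ))) * Real.log y
          ≤ (((PB y).filter (¬ · ≤ m)).card * (2/(y:ℝ))) * Real.log y := by
            apply mul_le_mul_of_nonneg_right h1 hlogy_pos.le
        _ = (((PB y).filter (¬ · ≤ m)).card * Real.log y) * (2/(y:ℝ)) := by ring
        _ ≤ (((PB y).card : ℝ) * Real.log y) * (2/(y:ℝ)) := by
            apply mul_le_mul_of_nonneg_right _ (by positivity)
            exact mul_le_mul_of_nonneg_right h2 hlogy_pos.le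
        _ ≤ (10 * y) * (2/(y:ℝ)) := mul_le_mul_of_nonneg_right h3 (by positivity)
        _ = 20 := by field_simp; ring
    have hIH := ih m hmlt hm16
    -- gap: 40*(loglog y - loglog m) ≥ 40*log2/log y ≥ 20/log y
    have hlogm_pos : (0:ℝ) < Real.log m := Real.log_pos (by exact_mod_cast (by omega : 2 ≤ m))
    have hgap : Real.log (Real.log m) + Real.log 2 / Real.log y ≤ Real.log (Real.log y) := by
      set a := Real.log (y:ℝ)
      set b := Real.log (m:ℝ)
      have hab : b + Real.log 2 ≤ a := by
        have h2m : ((2*m : ℕ):ℝ) ≤ (y:ℝ) := by exact_mod_cast (by omega : 2*m ≤ y)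
        have : Real.log ((2*m : ℕ):ℝ) ≤ a := Real.log_le_log (by push_cast; linarith) h2m
        rw [show ((2*m : ℕ):ℝ) = 2 * (m:ℝ) by push_cast; ring, Real.log_mul (by norm_num)
          (by linarith)] at this
        linarith
    -- log a - log b ≥ (a-b)/a ≥ log2/a
      have hkey : Real.log b ≤ Real.log a - (a - b)/a := by
        have h1 : Real.log (b/a) ≤ b/a - 1 := Real.log_le_sub_one_of_pos (by positivity)
        rw [Real.log_div hlogm_pos.ne' hlogy_pos.ne'] at h1
        have h2 : b/a - 1 = -((a-b)/a) := by field_simp; ring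
        linarith [h1.trans_eq h2]
      have hl2 : (0:ℝ) < Real.log 2 := Real.log_pos (by norm_num)
      have h3 : Real.log 2 / a ≤ (a - b)/a :=
        (div_le_div_iff_of_pos_right hlogy_pos).2 (by linarith)
      linarith
    have hl2b : 20 / Real.log y ≤ 40 * (Real.log 2 / Real.log y) := by
      rw [div_le_iff₀ hlogy_pos]
      have := Real.log_two_gt_d9
      field_simp
      nlinarith
    rw [hsplit, hhead]
    linarith

/-- prime tuples with product at most y -/
def TT (k y : ℕ) : Finset (Fin k → ℕ) :=
  (Fintype.piFinset fun _ : Fin k => PB y).filter (fun p => ∏ i, p i ≤ y)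

lemma mem_TT {k y : ℕ} {p : Fin k → ℕ} :
    p ∈ TT k y ↔ (∀ i, p i ∈ PB y) ∧ ∏ i, p i ≤ y := by
  simp [TT, Fintype.mem_piFinset]

lemma TT_recip (k y : ℕ) :
    ∑ p ∈ TT k y, ∏ i, (1/(p i : ℝ)) ≤ (∑ q ∈ PB y, 1/(q:ℝ))^k := by
  have h1 : ∑ p ∈ Fintype.piFinset (fun _ : Fin k => PB y), ∏ i, (1/(p i : ℝ))
      = ∏ _i : Fin k, ∑ q ∈ PB y, 1/(q:ℝ) :=
    (Finset.prod_univ_sum (fun _ : Fin k => PB y) (fun _ (q:ℕ) => 1/(q:ℝ))).symm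
  rw [show (∑ q ∈ PB y, 1/(q:ℝ))^k = ∏ _i : Fin k, ∑ q ∈ PB y, 1/(q:ℝ) by
    rw [Finset.prod_const, Finset.card_univ, Fintype.card_fin], ← h1]
  apply Finset.sum_le_sum_of_subset_of_nonneg (Finset.filter_subset _ _)
  intro p _ _
  positivity

lemma main_count (k y : ℕ) (hy : 4 ≤ y) :
    ((TT (k+1) y).card : ℝ) * Real.log y
      ≤ 20 * (k+1)^2 * y * (∑ q ∈ PB y, 1/(q:ℝ))^k := by
  classical
  set D := TT (k+1) y with hD
  set E : Fin (k+1) → Finset (Fin (k+1) → ℕ) := fun j => D.filter (fun p => ∀ i, p i ≤ p j)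
    with hE
  have hcover : D ⊆ Finset.univ.biUnion E := by
    intro p hp
    obtain ⟨j, -, hj⟩ := Finset.exists_max_image Finset.univ p ⟨0, Finset.mem_univ 0⟩
    exact Finset.mem_biUnion.2 ⟨j, Finset.mem_univ j,
      Finset.mem_filter.2 ⟨hp, fun i => hj i (Finset.mem_univ i)⟩⟩
  have hcard : (D.card : ℝ) ≤ ∑ j : Fin (k+1), ((E j).card : ℝ) := by
    exact_mod_cast (Finset.card_le_card hcover).trans (Finset.card_biUnion_le)
  -- per-j bound
  have hEj : ∀ j : Fin (k+1), ((E j).card : ℝ) * Real.log y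
      ≤ 20 * (k+1) * y * (∑ q ∈ PB y, 1/(q:ℝ))^k := by
    intro j
    -- fiber decomposition over removeNth j
    have hmap : ∀ p ∈ E j, Fin.removeNth j p ∈ TT k y := by
      intro p hp
      obtain ⟨hpD, -⟩ := Finset.mem_filter.1 hp
      obtain ⟨hmem, hprod⟩ := mem_TT.1 hpD
      refine mem_TT.2 ⟨fun i => hmem _, ?_⟩
      have h2 : ∏ i, p i = p j * ∏ i, (Fin.removeNth j p) i := Fin.prod_univ_succAbove p j
      have hpj : 1 ≤ p j := (mem_PB.1 (hmem j)).2.one_lt.le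
      calc ∏ i, (Fin.removeNth j p) i ≤ p j * ∏ i, (Fin.removeNth j p) i :=
            Nat.le_mul_of_pos_left _ (by omega)
        _ ≤ y := h2 ▸ hprod
    have hfib := Finset.card_eq_sum_card_fiberwise hmap
    -- the q-set
    set Q : (Fin k → ℕ) → Finset ℕ := fun rest =>
      (PB y).filter (fun q => q * ∏ i, rest i ≤ y ∧ ∀ i, rest i ≤ q) with hQ
    have hfiber : ∀ rest ∈ TT k y,
        ((E j).filter (fun p => Fin.removeNth j p = rest)).card ≤ (Q rest).card := by
      intro rest _
      apply Finset.card_le_card_of_injOn (fun p => p j)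
      · intro p hp
        obtain ⟨hpE, hrest⟩ := Finset.mem_filter.1 hp
        obtain ⟨hpD, hmax⟩ := Finset.mem_filter.1 hpE
        obtain ⟨hmem, hprod⟩ := mem_TT.1 hpD
        refine Finset.mem_filter.2 ⟨hmem j, ?_, ?_⟩
        · have h2 : ∏ i, p i = p j * ∏ i, (Fin.removeNth j p) i := Fin.prod_univ_succAbove p j
          rw [← hrest]
          beta_reduce
          omega
        · intro i
          rw [← hrest]
          exact hmax _
      · intro p hp p' hp' hqq
        obtain ⟨-, hrest⟩ := Finset.mem_filter.1 hp
        obtain ⟨-, hrest'⟩ := Finset.mem_filter.1 hp'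
        funext i
        rcases eq_or_ne i j with rfl | hij
        · exact hqq
        · obtain ⟨l, rfl⟩ := Fin.exists_succAbove_eq hij
          have := congrFun (hrest.trans hrest'.symm) l
          exact this
    -- bound card (Q rest)
    have hQbound : ∀ rest ∈ TT k y, ((Q rest).card : ℝ) * Real.log y
        ≤ 20 * (k+1) * y * ∏ i, (1/(rest i : ℝ)) := by
      intro rest hrest
      obtain ⟨hmem, -⟩ := mem_TT.1 hrest
      set n := ∏ i, rest i with hn
      have hn1 : 1 ≤ n := Finset.one_le_prod' (fun i _ => (mem_PB.1 (hmem i)).2.one_lt.le)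
      have hprod_recip : ∏ i, (1/(rest i : ℝ)) = 1 / (n:ℝ) := by
        rw [hn]
        push_cast
        simp only [one_div]
        exact Finset.prod_inv_distrib _
      rcases Finset.eq_empty_or_nonempty (Q rest) with hemp | ⟨q, hq⟩
      · rw [hemp]
        simp only [Finset.card_empty, Nat.cast_zero, zero_mul]
        have : (0:ℝ) < 1/(n:ℝ) := by positivity
        rw [hprod_recip]
        positivity
      · obtain ⟨hqPB, hqn, hqmax⟩ := Finset.mem_filter.1 hq
        have hq2 : 2 ≤ q := (mem_PB.1 hqPB).2.two_le
        set t := y / n with ht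
        have hqt : q ≤ t := Nat.le_div_iff_mul_le (by omega) |>.2 hqn
        have ht2 : 2 ≤ t := hq2.trans hqt
        have hQsub : Q rest ⊆ PB t := by
          intro q' hq'
          obtain ⟨hq'PB, hq'n, -⟩ := Finset.mem_filter.1 hq'
          exact mem_PB.2 ⟨Nat.le_div_iff_mul_le (by omega) |>.2 hq'n, (mem_PB.1 hq'PB).2⟩
        -- 2 * t^(k+1) ≥ y
        have hnk : n ≤ q ^ k := by
          rw [hn]
          calc ∏ i, rest i ≤ q ^ (Finset.univ : Finset (Fin k)).card :=
                Finset.prod_le_pow_card _ _ _ (fun i _ => hqmax i)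
            _ = q ^ k := by rw [Finset.card_univ, Fintype.card_fin]
        have htk : n ≤ t ^ k := hnk.trans (Nat.pow_le_pow_left hqt k)
        have hnt : y < n * t + n := by
          have h1 := (Nat.div_add_mod y n).symm
          have h2 := Nat.mod_lt y (show 0 < n by omega)
          calc y = n * t + y % n := h1
            _ < n * t + n := Nat.add_lt_add_left h2 _
        have h2n : 2 * n ≤ y := by
          calc 2 * n ≤ q * n := by
                apply Nat.mul_le_mul_right _ hq2
            _ ≤ y := hqn
        have hyt : y ≤ 2 * t ^ (k+1) := by
          have h1 : n * t ≤ t ^ (k+1) := by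
            calc n * t ≤ t^k * t := Nat.mul_le_mul_right _ htk
              _ = t^(k+1) := (pow_succ t k).symm
          omega
        -- log y ≤ 2(k+1) log t
        have hlogt_pos : (0:ℝ) < Real.log t := Real.log_pos (by exact_mod_cast ht2)
        have hlogy : Real.log y ≤ 2 * (k+1) * Real.log t := by
          calc Real.log y ≤ Real.log (2 * (t:ℝ)^(k+1)) := by
                apply Real.log_le_log (by positivity)
                exact_mod_cast hyt
            _ = Real.log 2 + (k+1) * Real.log t := by
                rw [Real.log_mul (by norm_num) (by positivity), Real.log_pow]
                push_cast; ring
            _ ≤ Real.log t + (k+1) * Real.log t := by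
                have : Real.log 2 ≤ Real.log t := Real.log_le_log (by norm_num)
                  (by exact_mod_cast ht2)
                linarith
            _ ≤ 2 * (k+1) * Real.log t := by
                have hk1 : (1:ℝ) ≤ (k:ℝ)+1 := by
                  have : (0:ℝ) ≤ (k:ℝ) := Nat.cast_nonneg k
                  linarith
                nlinarith
        have hcheb := chebyshev t ht2
        have hQcard : ((Q rest).card : ℝ) ≤ ((PB t).card : ℝ) := by
          exact_mod_cast Finset.card_le_card hQsub
        have htn : (t : ℝ) * n ≤ y := by
          have h9 : t * n ≤ y := Nat.div_mul_le_self y n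
          exact_mod_cast h9
        rw [hprod_recip]
        have hn0 : (0:ℝ) < (n:ℝ) := by exact_mod_cast hn1
        have hQc0 : (0:ℝ) ≤ ((Q rest).card : ℝ) := by positivity
        calc ((Q rest).card : ℝ) * Real.log y
            ≤ ((Q rest).card : ℝ) * (2 * (k+1) * Real.log t) :=
              mul_le_mul_of_nonneg_left hlogy hQc0
          _ = 2 * (k+1) * (((Q rest).card : ℝ) * Real.log t) := by ring
          _ ≤ 2 * (k+1) * (((PB t).card : ℝ) * Real.log t) := by
              apply mul_le_mul_of_nonneg_left _ (by positivity)
              exact mul_le_mul_of_nonneg_right hQcard hlogt_pos.le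
          _ ≤ 2 * (k+1) * (10 * t) := by
              apply mul_le_mul_of_nonneg_left hcheb (by positivity)
          _ ≤ 20 * (k+1) * y * (1 / (n:ℝ)) := by
              rw [div_eq_inv_mul, mul_one]
              have h5 : (t:ℝ) ≤ (y:ℝ) * (n:ℝ)⁻¹ := by
                rw [← div_eq_mul_inv, le_div_iff₀ hn0]
                exact htn
              nlinarith [h5, (by positivity : (0:ℝ) ≤ (k:ℝ)+1)]
    -- assemble E j bound
    have hsum : ((E j).card : ℝ) ≤ ∑ rest ∈ TT k y, ((Q rest).card : ℝ) := by
      rw [hfib]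
      push_cast
      apply Finset.sum_le_sum
      intro rest hrest
      exact_mod_cast hfiber rest hrest
    have hlogy_nonneg : (0:ℝ) ≤ Real.log y :=
      Real.log_nonneg (by exact_mod_cast hy.trans' (by norm_num) : (1:ℝ) ≤ (y:ℝ))
    calc ((E j).card : ℝ) * Real.log y ≤ (∑ rest ∈ TT k y, ((Q rest).card : ℝ)) * Real.log y :=
          mul_le_mul_of_nonneg_right hsum hlogy_nonneg
      _ = ∑ rest ∈ TT k y, ((Q rest).card : ℝ) * Real.log y := Finset.sum_mul _ _ _
      _ ≤ ∑ rest ∈ TT k y, 20 * (k+1) * y * ∏ i, (1/(rest i : ℝ)) :=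
          Finset.sum_le_sum hQbound
      _ = 20 * (k+1) * y * ∑ rest ∈ TT k y, ∏ i, (1/(rest i : ℝ)) := by
          rw [Finset.mul_sum]
      _ ≤ 20 * (k+1) * y * (∑ q ∈ PB y, 1/(q:ℝ))^k := by
          apply mul_le_mul_of_nonneg_left (TT_recip k y) (by positivity)
  -- total
  have hfin : ((TT (k+1) y).card : ℝ) * Real.log y
      ≤ ∑ j : Fin (k+1), ((E j).card : ℝ) * Real.log y := by
    rw [← Finset.sum_mul]
    apply mul_le_mul_of_nonneg_right hcard
    exact Real.log_nonneg (by exact_mod_cast hy.trans' (by norm_num) : (1:ℝ) ≤ (y:ℝ))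
  calc ((TT (k+1) y).card : ℝ) * Real.log y ≤ _ := hfin
    _ ≤ ∑ _j : Fin (k+1), 20 * (k+1) * y * (∑ q ∈ PB y, 1/(q:ℝ))^k :=
        Finset.sum_le_sum (fun j _ => hEj j)
    _ = 20 * (k+1)^2 * y * (∑ q ∈ PB y, 1/(q:ℝ))^k := by
        rw [Finset.sum_const, Finset.card_univ, Fintype.card_fin, nsmul_eq_mul]
        push_cast; ring

lemma count_le (r : ℕ) (β : Fin (r + 1) → ℕ) (hpos : ∀ i, 0 < β i) (hmono : Monotone β)
    (x : ℝ) (hx : 0 ≤ x) :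
    countIn (Psigma β) x ≤ (TT (r+1) ⌊x ^ ((1:ℝ)/(β 0 : ℝ))⌋₊).card := by
  classical
  set X := ⌊x ^ ((1:ℝ)/(β 0 : ℝ))⌋₊ with hX
  rw [countIn, ← Nat.card_eq_finsetCard]
  set S := {n : ℕ | (n : ℝ) ≤ x ∧ n ∈ Psigma β} with hS
  have hα : (0:ℝ) < (β 0 : ℝ) := by exact_mod_cast hpos 0
  -- a choice function
  have key : ∀ n : S, ∃ p : Fin (r+1) → ℕ, p ∈ TT (r+1) X ∧ (n : ℕ) = ∏ i, p i ^ β i := by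
    rintro ⟨n, hnx, p, hp, rfl⟩
    refine ⟨p, ?_, rfl⟩
    have hp1 : ∀ i, 1 ≤ p i := fun i => (hp i).one_lt.le
    -- (∏ p i)^(β 0) ≤ ∏ p i ^ β i
    have hpow : (∏ i, p i) ^ (β 0) ≤ ∏ i, p i ^ β i := by
      rw [← Finset.prod_pow]
      apply Finset.prod_le_prod'
      intro i _
      exact Nat.pow_le_pow_right (hp1 i) (hmono (Fin.zero_le i))
    -- so ∏ p i ≤ x^(1/β0)
    have hmle : ((∏ i, p i : ℕ) : ℝ) ≤ x ^ ((1:ℝ)/(β 0 : ℝ)) := by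
      have h1 : (((∏ i, p i : ℕ):ℝ)) ^ (β 0 : ℝ) ≤ x := by
        rw [Real.rpow_natCast]
        calc (((∏ i, p i : ℕ):ℝ)) ^ (β 0) = (((∏ i, p i)^(β 0) : ℕ) : ℝ) := by push_cast; ring
          _ ≤ ((∏ i, p i ^ β i : ℕ) : ℝ) := by exact_mod_cast hpow
          _ ≤ x := hnx
      have hm0 : (0:ℝ) ≤ ((∏ i, p i : ℕ) : ℝ) := by positivity
      calc ((∏ i, p i : ℕ) : ℝ) = ((((∏ i, p i : ℕ):ℝ)) ^ (β 0 : ℝ)) ^ ((1:ℝ)/(β 0:ℝ)) := by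
            rw [← Real.rpow_mul hm0, mul_one_div, div_self hα.ne', Real.rpow_one]
        _ ≤ x ^ ((1:ℝ)/(β 0:ℝ)) := by
            apply Real.rpow_le_rpow (by positivity) h1 (by positivity)
    have hmX : ∏ i, p i ≤ X := Nat.le_floor hmle
    refine mem_TT.2 ⟨fun i => mem_PB.2 ⟨?_, hp i⟩, hmX⟩
    calc p i ≤ ∏ j, p j := Finset.single_le_prod' (fun j _ => hp1 j) (Finset.mem_univ i)
      _ ≤ X := hmX
  choose f hfTT hfeq using key
  have : Nat.card S ≤ Nat.card {p // p ∈ TT (r+1) X} := by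
    apply Nat.card_le_card_of_injective (fun n => (⟨f n, hfTT n⟩ : {p // p ∈ TT (r+1) X}))
    intro n n' h
    have h2 : f n = f n' := congrArg Subtype.val h
    apply Subtype.ext
    rw [hfeq n, hfeq n', h2]
  simpa [Nat.card_eq_finsetCard] using this

theorem sigma_beta_upper_bound (r : ℕ) (β : Fin (r + 1) → ℕ)
    (hpos : ∀ i, 0 < β i) (hmono : Monotone β) :
    (fun x : ℝ => (countIn (Psigma β) x : ℝ)) =O[atTop]
      (fun x : ℝ =>
        x ^ ((1 : ℝ) / (β 0 : ℝ)) * Real.log (Real.log x) ^ r / Real.log x) := by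
  set α := β 0 with hα
  have hα1 : 1 ≤ α := hpos 0
  have hαR : (1:ℝ) ≤ (α:ℝ) := by exact_mod_cast hα1
  have hαpos : (0:ℝ) < (α:ℝ) := by linarith
  rw [isBigO_iff]
  refine ⟨20 * ((r:ℝ)+1)^2 * 40^r * 2 * (α:ℝ), ?_⟩
  have ev1 : ∀ᶠ x : ℝ in atTop, (16:ℝ) ≤ x ^ ((1:ℝ)/(α:ℝ)) :=
    (tendsto_rpow_atTop (by positivity)).eventually_ge_atTop 16
  have ev2 : ∀ᶠ x : ℝ in atTop, 2 * (α:ℝ) * Real.log 2 ≤ Real.log x :=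
    Real.tendsto_log_atTop.eventually_ge_atTop _
  filter_upwards [ev1, ev2, eventually_ge_atTop (16:ℝ)] with x hu16 hlx hx16
  have hx0 : (0:ℝ) < x := by linarith
  set u := x ^ ((1:ℝ)/(α:ℝ)) with hu
  set X := ⌊u⌋₊ with hXdef
  have hX16 : 16 ≤ X := Nat.le_floor (by exact_mod_cast hu16)
  have hXu : (X:ℝ) ≤ u := Nat.floor_le (by linarith)
  have hXu2 : u ≤ 2 * X := by
    have h1 : u - 1 ≤ X := by
      have := Nat.sub_one_lt_floor u
      linarith [this.le]
    have hX1 : (1:ℝ) ≤ (X:ℝ) := by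
      have : (16:ℝ) ≤ (X:ℝ) := by exact_mod_cast hX16
      linarith
    linarith
  have hXpos : (0:ℝ) < (X:ℝ) := by
    have : (16:ℝ) ≤ (X:ℝ) := by exact_mod_cast hX16
    linarith
  have hX16R : (16:ℝ) ≤ (X:ℝ) := by exact_mod_cast hX16
  have hlogX_pos : (0:ℝ) < Real.log X := Real.log_pos (by linarith)
  have hSS : ∑ q ∈ PB X, (1/(q:ℝ)) ≤ 40 * Real.log (Real.log X) := mertens X hX16
  have hSS0 : (0:ℝ) ≤ ∑ q ∈ PB X, (1/(q:ℝ)) := Finset.sum_nonneg (fun q _ => by positivity)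
  have hllX1 : 1 ≤ Real.log (Real.log X) := loglog_ge_one hX16R
  have hllx1 : 1 ≤ Real.log (Real.log x) := loglog_ge_one hx16
  have hu0 : (0:ℝ) < u := Real.rpow_pos_of_pos hx0 _
  have hux : u ≤ x := by
    calc u = x ^ ((1:ℝ)/(α:ℝ)) := rfl
      _ ≤ x ^ (1:ℝ) := Real.rpow_le_rpow_of_exponent_le (by linarith)
          (by rw [div_le_one hαpos]; exact hαR)
      _ = x := Real.rpow_one x
  have hXx : (X:ℝ) ≤ x := hXu.trans hux
  have hlogx_pos : (0:ℝ) < Real.log x := Real.log_pos (by linarith)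
  have hll : Real.log (Real.log X) ≤ Real.log (Real.log x) :=
    Real.log_le_log hlogX_pos (Real.log_le_log hXpos hXx)
  have hlogu : Real.log x = (α:ℝ) * Real.log u := by
    rw [Real.log_rpow hx0]
    field_simp
  have hlogxX : Real.log x ≤ 2 * (α:ℝ) * Real.log X := by
    have h1 : Real.log u ≤ Real.log X + Real.log 2 := by
      have h2 : Real.log (u/2) ≤ Real.log X := Real.log_le_log (by linarith) (by linarith)
      rw [Real.log_div (by linarith) (by norm_num)] at h2
      linarith
    have h3 := mul_le_mul_of_nonneg_left h1 hαpos.le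
    linarith [hlx]
  have hcount : (countIn (Psigma β) x : ℝ) ≤ ((TT (r+1) X).card : ℝ) := by
    exact_mod_cast count_le r β hpos hmono x hx0.le
  have hmain := main_count r X (by omega)
  have hpow : (∑ q ∈ PB X, 1/(q:ℝ))^r ≤ 40^r * Real.log (Real.log x) ^ r := by
    calc (∑ q ∈ PB X, 1/(q:ℝ))^r ≤ (40 * Real.log (Real.log X))^r :=
          pow_le_pow_left₀ hSS0 hSS r
      _ ≤ (40 * Real.log (Real.log x))^r :=
          pow_le_pow_left₀ (by linarith) (by linarith) r
      _ = 40^r * Real.log (Real.log x) ^ r := mul_pow _ _ _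
  have hN0 : (0:ℝ) ≤ (countIn (Psigma β) x : ℝ) := by positivity
  have hchain : (countIn (Psigma β) x : ℝ) * Real.log x
      ≤ (20 * ((r:ℝ)+1)^2 * 40^r * 2 * (α:ℝ)) * (u * Real.log (Real.log x) ^ r) := by
    have step1 : (countIn (Psigma β) x : ℝ) * Real.log x
        ≤ (countIn (Psigma β) x : ℝ) * (2 * (α:ℝ) * Real.log X) :=
      mul_le_mul_of_nonneg_left hlogxX hN0
    have step2 : (countIn (Psigma β) x : ℝ) * Real.log X
        ≤ ((TT (r+1) X).card : ℝ) * Real.log X :=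
      mul_le_mul_of_nonneg_right hcount hlogX_pos.le
    have step4 : ((X:ℝ)) * (∑ q ∈ PB X, 1/(q:ℝ))^r ≤ u * (40^r * Real.log (Real.log x)^r) :=
      mul_le_mul hXu hpow (by positivity) hu0.le
    have h20 : (0:ℝ) ≤ 20*((r:ℝ)+1)^2 := by positivity
    have step5 : 20*((r:ℝ)+1)^2 * (X:ℝ) * (∑ q ∈ PB X, 1/(q:ℝ))^r
        ≤ 20*((r:ℝ)+1)^2 * (u * (40^r * Real.log (Real.log x)^r)) := by
      rw [mul_assoc]
      exact mul_le_mul_of_nonneg_left step4 h20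
    have hα0 : (0:ℝ) ≤ 2 * (α:ℝ) := by linarith
    calc (countIn (Psigma β) x : ℝ) * Real.log x
        ≤ (countIn (Psigma β) x : ℝ) * (2 * (α:ℝ) * Real.log X) := step1
      _ = 2 * (α:ℝ) * ((countIn (Psigma β) x : ℝ) * Real.log X) := by ring
      _ ≤ 2 * (α:ℝ) * (((TT (r+1) X).card : ℝ) * Real.log X) :=
          mul_le_mul_of_nonneg_left step2 hα0
      _ ≤ 2 * (α:ℝ) * (20*((r:ℝ)+1)^2 * (X:ℝ) * (∑ q ∈ PB X, 1/(q:ℝ))^r) := by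
          apply mul_le_mul_of_nonneg_left _ hα0
          exact_mod_cast hmain
      _ ≤ 2 * (α:ℝ) * (20*((r:ℝ)+1)^2 * (u * (40^r * Real.log (Real.log x)^r))) :=
          mul_le_mul_of_nonneg_left step5 hα0
      _ = (20 * ((r:ℝ)+1)^2 * 40^r * 2 * (α:ℝ)) * (u * Real.log (Real.log x) ^ r) := by ring
  have hRHS0 : (0:ℝ) ≤ u * Real.log (Real.log x) ^ r / Real.log x :=
    div_nonneg (mul_nonneg hu0.le (pow_nonneg (by linarith) r)) hlogx_pos.le
  rw [Real.norm_eq_abs, Real.norm_eq_abs, abs_of_nonneg hN0, abs_of_nonneg hRHS0]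
  have heq : (20 * ((r:ℝ)+1)^2 * 40^r * 2 * (α:ℝ)) * (u * Real.log (Real.log x) ^ r / Real.log x)
      = ((20 * ((r:ℝ)+1)^2 * 40^r * 2 * (α:ℝ)) * (u * Real.log (Real.log x) ^ r)) / Real.log x := by
    ring
  have hfinal : (countIn (Psigma β) x : ℝ)
      ≤ (20 * ((r:ℝ)+1)^2 * 40^r * 2 * (α:ℝ)) * (u * Real.log (Real.log x) ^ r / Real.log x) := by
    rw [heq, le_div_iff₀ hlogx_pos]
    exact hchain
  refine hfinal.trans (le_of_eq ?_)
  push_cast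
  ring
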